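/- arXiv:0805.4112 — 5 statements merged into one kernel-verified Lean document; each statement's English description precedes it below -/
import Mathlib

section
/- If R is an ultra log-concave probability mass function on ℤ≥0 with mean λ > 0, then its size-biased version R^#(x) = (x+1)·R(x+1)/λ is also ultra log-concave. -/
/-- Size-biasing preserves ultra log-concavity. -/
theorem sizeBiased_ulc (R : ℕ → ℝ) (lam : ℝ) (hlam : 0 < lam)
    (hnonneg : ∀ x, 0 ≤ R x) (hsum : ∑' x, R x = 1)
    (hmean : ∑' x : ℕ, (x : ℝ) * R x = lam)
    (hULC : ∀ x : ℕ, 1 ≤ x → (x : ℝ) * R x ^ 2 ≥ ((x : ℝ) + 1) * R (x + 1) * R (x - 1)) :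
    ∀ x : ℕ, 1 ≤ x →
      (x : ℝ) * (((x : ℝ) + 1) * R (x + 1) / lam) ^ 2 ≥
        ((x : ℝ) + 1) * ((((x : ℝ) + 1) + 1) * R ((x + 1) + 1) / lam) *
          ((((x : ℝ) - 1) + 1) * R ((x - 1) + 1) / lam) := by
  intro x hx
  have hx1 : x - 1 + 1 = x := by omega
  rw [hx1]
  have h := hULC (x + 1) (by omega)
  have h2 : (x + 1 : ℕ) - 1 = x := by omega
  rw [h2] at h
  push_cast at h
  have hm : (↑x - 1 + 1 : ℝ) = ↑x := by ring
  have e1 : (↑x + 1) * ((↑x + 1 + 1) * R (x + 1 + 1) / lam) * (↑x * R x / lam)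
      = ((↑x + 1) * ((↑x + 1 + 1) * R (x + 1 + 1)) * (↑x * R x)) / lam ^ 2 := by
    field_simp [hlam.ne']
  have e2 : (↑x : ℝ) * ((↑x + 1) * R (x + 1) / lam) ^ 2
      = (↑x * ((↑x + 1) * R (x + 1)) ^ 2) / lam ^ 2 := by
    field_simp [hlam.ne']
  rw [hm, ge_iff_le, e1, e2, div_le_div_iff₀ (by positivity) (by positivity)]
  nlinarith [mul_le_mul_of_nonneg_left h
    (mul_nonneg (Nat.cast_nonneg x) (by positivity : (0:ℝ) ≤ (x:ℝ)+1)), sq_nonneg lam]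
end

section
/- Let Q be a log-concave probability mass function on ℕ = {1,2,...}. Then for all integers m ≥ n ≥ 0 and all x, Q^{*m}(x+1)·Q^{*n}(x) ≥ Q^{*m}(x)·Q^{*n}(x+1), where Q^{*k} denotes the k-fold convolution of Q (with Q^{*0} the point mass at 0). -/
/-- k-fold convolution power of a pmf on the nonnegative integers. -/
noncomputable def convPow (Q : ℕ → ℝ) : ℕ → ℕ → ℝ
  | 0 => fun x => if x = 0 then 1 else 0
  | n + 1 => fun x => ∑ y ∈ Finset.range (x + 1), Q y * convPow Q n (x - y)

section Aux

lemma convPow_eq_coeff (Q : ℕ → ℝ) (n x : ℕ) :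
    convPow Q n x = PowerSeries.coeff x ((PowerSeries.mk Q) ^ n) := by
  induction n generalizing x with
  | zero => simp [convPow, PowerSeries.coeff_one]
  | succ n ih =>
    rw [pow_succ', PowerSeries.coeff_mul, Finset.Nat.sum_antidiagonal_eq_sum_range_succ_mk]
    simp [convPow, ih]

lemma convPow_add (Q : ℕ → ℝ) (k n x : ℕ) :
    convPow Q (k + n) x = ∑ y ∈ Finset.range (x + 1), convPow Q k y * convPow Q n (x - y) := by
  rw [convPow_eq_coeff, pow_add, PowerSeries.coeff_mul,
    Finset.Nat.sum_antidiagonal_eq_sum_range_succ_mk]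
  simp [convPow_eq_coeff]

lemma convPow_nonneg (Q : ℕ → ℝ) (hQ : ∀ x, 0 ≤ Q x) (n x : ℕ) : 0 ≤ convPow Q n x := by
  induction n generalizing x with
  | zero => simp [convPow]; positivity
  | succ n ih =>
    exact Finset.sum_nonneg fun y _ => mul_nonneg (hQ y) (ih _)

lemma convPow_one (Q : ℕ → ℝ) (x : ℕ) : convPow Q 1 x = Q x := by
  rw [convPow_eq_coeff]; simp

lemma convPow_zero_arg (Q : ℕ → ℝ) (hQ0 : Q 0 = 0) (n : ℕ) (hn : 1 ≤ n) :
    convPow Q n 0 = 0 := by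
  obtain ⟨m, rfl⟩ := Nat.exists_eq_add_of_le hn
  rw [show 1 + m = m + 1 from by omega]
  simp [convPow, hQ0]

lemma kp_iter (f : ℕ → ℝ)
    (hkp : ∀ s t : ℕ, s ≤ t → f (s - 1) * f (t + 1) ≤ f s * f t) :
    ∀ d s t : ℕ, s ≤ t → f (s - d) * f (t + d) ≤ f s * f t := by
  intro d
  induction d with
  | zero => intro s t _; simp
  | succ d ih =>
    intro s t hst
    have h1 := hkp (s - d) (t + d) (by omega)
    have e1 : s - d - 1 = s - (d + 1) := by omega
    have e2 : t + d + 1 = t + (d + 1) := by omega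
    rw [e1, e2] at h1
    exact h1.trans (ih s t hst)

lemma tp2_of_kp (f : ℕ → ℝ) (h0 : f 0 = 0) (hnn : ∀ x, 0 ≤ f x)
    (hkp : ∀ s t : ℕ, s ≤ t → f (s - 1) * f (t + 1) ≤ f s * f t) :
    ∀ x1 x2 y1 y2 : ℕ, x1 ≤ x2 → y1 ≤ y2 →
      f (x1 - y2) * f (x2 - y1) ≤ f (x1 - y1) * f (x2 - y2) := by
  intro x1 x2 y1 y2 hx hy
  by_cases hc : x1 ≤ y2
  · rw [Nat.sub_eq_zero_of_le hc, h0, zero_mul]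
    exact mul_nonneg (hnn _) (hnn _)
  · push_neg at hc
    rcases le_total (x1 - y1) (x2 - y2) with h | h
    · have := kp_iter f hkp (y2 - y1) (x1 - y1) (x2 - y2) h
      have e1 : x1 - y1 - (y2 - y1) = x1 - y2 := by omega
      have e2 : x2 - y2 + (y2 - y1) = x2 - y1 := by omega
      rwa [e1, e2] at this
    · have := kp_iter f hkp ((y2 - y1) - ((x1 - y1) - (x2 - y2))) (x2 - y2) (x1 - y1) h
      have e1 : x2 - y2 - ((y2 - y1) - ((x1 - y1) - (x2 - y2))) = x1 - y2 := by omega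
      have e2 : x1 - y1 + ((y2 - y1) - ((x1 - y1) - (x2 - y2))) = x2 - y1 := by omega
      rw [e1, e2] at this
      linarith [this, mul_comm (f (x1 - y2)) (f (x2 - y1)), mul_comm (f (x2 - y2)) (f (x1 - y1))]

lemma chainQ (Q : ℕ → ℝ) (hnonneg : ∀ x, 0 ≤ Q x)
    (hLC : ∀ x : ℕ, 1 ≤ x → Q x ^ 2 ≥ Q (x + 1) * Q (x - 1)) :
    ∀ k s : ℕ, 1 ≤ s → (∀ j, s - 1 ≤ j → j ≤ s + k + 1 → 0 < Q j) →
      Q (s - 1) * Q (s + k + 1) ≤ Q s * Q (s + k) := by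
  intro k
  induction k with
  | zero =>
    intro s hs _
    have h := hLC s hs
    rw [show s + 0 + 1 = s + 1 from by omega, show s + 0 = s from by omega]
    nlinarith [h]
  | succ k ih =>
    intro s hs hpos
    have h1 := ih s hs (fun j hj1 hj2 => hpos j hj1 (by omega))
    have h2 := hLC (s + k + 1) (by omega)
    rw [show s + k + 1 - 1 = s + k from by omega, show s + k + 1 + 1 = s + k + 2 from rfl] at h2
    have p1 : 0 < Q (s + k) := hpos _ (by omega) (by omega)
    have p2 : 0 < Q (s + k + 1) := hpos _ (by omega) (by omega)
    have hq : 0 ≤ Q (s - 1) := hnonneg _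
    have goal' : Q (s - 1) * Q (s + k + 2) ≤ Q s * Q (s + k + 1) := by
      nlinarith [mul_le_mul_of_nonneg_left h2.le hq, mul_le_mul_of_nonneg_right h1 p2.le,
        hnonneg s, hnonneg (s + k + 2), p1, p2]
    rw [show s + (k + 1) + 1 = s + k + 2 from by omega, show s + (k + 1) = s + k + 1 from by omega]
    exact goal'

lemma kpQ (Q : ℕ → ℝ) (hnonneg : ∀ x, 0 ≤ Q x) (hQ0 : Q 0 = 0)
    (hintvl : ∀ a b c : ℕ, a ≤ b → b ≤ c → 0 < Q a → 0 < Q c → 0 < Q b)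
    (hLC : ∀ x : ℕ, 1 ≤ x → Q x ^ 2 ≥ Q (x + 1) * Q (x - 1)) :
    ∀ s t : ℕ, s ≤ t → Q (s - 1) * Q (t + 1) ≤ Q s * Q t := by
  intro s t hst
  rcases Nat.eq_zero_or_pos s with rfl | hs
  · simp [hQ0]
  · by_cases hz : Q (s - 1) = 0 ∨ Q (t + 1) = 0
    · rcases hz with h | h <;> rw [h] <;>
        simp <;> exact mul_nonneg (hnonneg _) (hnonneg _)
    · push_neg at hz
      have p1 : 0 < Q (s - 1) := lt_of_le_of_ne (hnonneg _) (Ne.symm hz.1)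
      have p2 : 0 < Q (t + 1) := lt_of_le_of_ne (hnonneg _) (Ne.symm hz.2)
      have hpos : ∀ j, s - 1 ≤ j → j ≤ s + (t - s) + 1 → 0 < Q j := by
        intro j hj1 hj2
        exact hintvl (s - 1) j (t + 1) hj1 (by omega) p1 p2
      have := chainQ Q hnonneg hLC (t - s) s hs hpos
      rw [show s + (t - s) + 1 = t + 1 from by omega, show s + (t - s) = t from by omega] at this
      exact this

lemma sum_extend (a b : ℕ → ℝ) (hb0 : b 0 = 0) {s N : ℕ} (h : s + 1 ≤ N) :
    ∑ z ∈ Finset.range (s + 1), a z * b (s - z) = ∑ z ∈ Finset.range N, a z * b (s - z) := by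
  apply Finset.sum_subset (Finset.range_subset_range.mpr h)
  intro z hz hz2
  simp only [Finset.mem_range] at hz hz2
  rw [Nat.sub_eq_zero_of_le (by omega), hb0, mul_zero]

lemma sum_shift (a b : ℕ → ℝ) (ha0 : a 0 = 0) (hb0 : b 0 = 0) {s N : ℕ} (h : s + 2 ≤ N) :
    ∑ z ∈ Finset.range N, a (z - 1) * b (s + 1 - z) = ∑ z ∈ Finset.range (s + 1), a z * b (s - z) := by
  obtain ⟨M, rfl⟩ : ∃ M, N = M + 1 := ⟨N - 1, by omega⟩
  rw [Finset.sum_range_succ']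
  simp only [Nat.add_sub_cancel, Nat.succ_sub_succ, Nat.zero_sub, ha0, zero_mul, add_zero]
  exact (sum_extend a b hb0 (by omega)).symm

lemma conv_kp (a b c : ℕ → ℝ) (ha : ∀ x, 0 ≤ a x) (hb : ∀ x, 0 ≤ b x)
    (ha0 : a 0 = 0) (hb0 : b 0 = 0)
    (hka : ∀ s t : ℕ, s ≤ t → a (s - 1) * a (t + 1) ≤ a s * a t)
    (hkb : ∀ s t : ℕ, s ≤ t → b (s - 1) * b (t + 1) ≤ b s * b t)
    (hc : ∀ x, c x = ∑ y ∈ Finset.range (x + 1), a y * b (x - y)) :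
    ∀ s t : ℕ, s ≤ t → c (s - 1) * c (t + 1) ≤ c s * c t := by
  have hcnn : ∀ x, 0 ≤ c x := fun x => by
    rw [hc]; exact Finset.sum_nonneg fun y _ => mul_nonneg (ha y) (hb _)
  have hc0 : c 0 = 0 := by rw [hc]; simp [ha0]
  intro s t hst
  rcases Nat.eq_zero_or_pos s with rfl | hs
  · simp [hc0]
  · obtain ⟨u, rfl⟩ : ∃ u, s = u + 1 := ⟨s - 1, by omega⟩
    obtain ⟨v, rfl⟩ : ∃ v, t = v + 1 := ⟨t - 1, by omega⟩
    have huv : u ≤ v := by omega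
    rw [Nat.add_sub_cancel, show v + 1 + 1 = v + 2 from rfl]
    set N := v + 3 with hN
    have e1 : c (u + 1) = ∑ z ∈ Finset.range N, a z * b (u + 1 - z) := by
      rw [hc]; exact sum_extend a b hb0 (by omega)
    have e4 : c (v + 2) = ∑ w ∈ Finset.range N, a w * b (v + 2 - w) := by
      rw [hc]
    have e2 : c u = ∑ z ∈ Finset.range N, a (z - 1) * b (u + 1 - z) := by
      rw [hc]; exact (sum_shift a b ha0 hb0 (by omega)).symm
    have e3 : c (v + 1) = ∑ w ∈ Finset.range N, a (w - 1) * b (v + 2 - w) := by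
      rw [hc]; exact (sum_shift a b ha0 hb0 (by omega)).symm
    have tp2b := tp2_of_kp b hb0 hb hkb
    have key : ∀ z w : ℕ,
        0 ≤ (a z * a (w - 1) - a (z - 1) * a w) * (b (u + 1 - z) * b (v + 2 - w))
          + (a w * a (z - 1) - a (w - 1) * a z) * (b (u + 1 - w) * b (v + 2 - z)) := by
      intro z w
      rcases lt_trichotomy z w with h | rfl | h
      · have hM : a (z - 1) * a w ≤ a z * a (w - 1) := by
          have := hka z (w - 1) (by omega)
          rwa [show w - 1 + 1 = w from by omega] at this
        have hB : b (u + 1 - w) * b (v + 2 - z) ≤ b (u + 1 - z) * b (v + 2 - w) :=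
          tp2b (u + 1) (v + 2) z w (by omega) h.le
        have e : (a z * a (w - 1) - a (z - 1) * a w) * (b (u + 1 - z) * b (v + 2 - w))
            + (a w * a (z - 1) - a (w - 1) * a z) * (b (u + 1 - w) * b (v + 2 - z))
            = (a z * a (w - 1) - a (z - 1) * a w)
              * (b (u + 1 - z) * b (v + 2 - w) - b (u + 1 - w) * b (v + 2 - z)) := by ring
        rw [e]
        exact mul_nonneg (by linarith) (by linarith)
      · have e : (a z * a (z - 1) - a (z - 1) * a z) * (b (u + 1 - z) * b (v + 2 - z))
            + (a z * a (z - 1) - a (z - 1) * a z) * (b (u + 1 - z) * b (v + 2 - z)) = 0 := by ring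
        rw [e]
      · have hM : a (w - 1) * a z ≤ a w * a (z - 1) := by
          have := hka w (z - 1) (by omega)
          rwa [show z - 1 + 1 = z from by omega] at this
        have hB : b (u + 1 - z) * b (v + 2 - w) ≤ b (u + 1 - w) * b (v + 2 - z) :=
          tp2b (u + 1) (v + 2) w z (by omega) h.le
        have e : (a z * a (w - 1) - a (z - 1) * a w) * (b (u + 1 - z) * b (v + 2 - w))
            + (a w * a (z - 1) - a (w - 1) * a z) * (b (u + 1 - w) * b (v + 2 - z))
            = (a w * a (z - 1) - a (w - 1) * a z)
              * (b (u + 1 - w) * b (v + 2 - z) - b (u + 1 - z) * b (v + 2 - w)) := by ring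
        rw [e]
        exact mul_nonneg (by linarith) (by linarith)
    have hsum : c (u + 1) * c (v + 1) - c u * c (v + 2)
        = ∑ z ∈ Finset.range N, ∑ w ∈ Finset.range N,
            (a z * a (w - 1) - a (z - 1) * a w) * (b (u + 1 - z) * b (v + 2 - w)) := by
      rw [e1, e2, e3, e4, Finset.sum_mul_sum, Finset.sum_mul_sum, ← Finset.sum_sub_distrib]
      refine Finset.sum_congr rfl fun z _ => ?_
      rw [← Finset.sum_sub_distrib]
      refine Finset.sum_congr rfl fun w _ => ?_
      ring
    have hswap : (∑ z ∈ Finset.range N, ∑ w ∈ Finset.range N,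
            (a z * a (w - 1) - a (z - 1) * a w) * (b (u + 1 - z) * b (v + 2 - w)))
        = ∑ z ∈ Finset.range N, ∑ w ∈ Finset.range N,
            (a w * a (z - 1) - a (w - 1) * a z) * (b (u + 1 - w) * b (v + 2 - z)) :=
      Finset.sum_comm
    have htot : 0 ≤ ∑ z ∈ Finset.range N, ∑ w ∈ Finset.range N,
        ((a z * a (w - 1) - a (z - 1) * a w) * (b (u + 1 - z) * b (v + 2 - w))
          + (a w * a (z - 1) - a (w - 1) * a z) * (b (u + 1 - w) * b (v + 2 - z))) :=
      Finset.sum_nonneg fun z _ => Finset.sum_nonneg fun w _ => key z w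
    have hsplit : (∑ z ∈ Finset.range N, ∑ w ∈ Finset.range N,
        ((a z * a (w - 1) - a (z - 1) * a w) * (b (u + 1 - z) * b (v + 2 - w))
          + (a w * a (z - 1) - a (w - 1) * a z) * (b (u + 1 - w) * b (v + 2 - z))))
        = (∑ z ∈ Finset.range N, ∑ w ∈ Finset.range N,
            (a z * a (w - 1) - a (z - 1) * a w) * (b (u + 1 - z) * b (v + 2 - w)))
          + ∑ z ∈ Finset.range N, ∑ w ∈ Finset.range N,
            (a w * a (z - 1) - a (w - 1) * a z) * (b (u + 1 - w) * b (v + 2 - z)) := by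
      rw [← Finset.sum_add_distrib]
      refine Finset.sum_congr rfl fun z _ => ?_
      rw [← Finset.sum_add_distrib]
    rw [hsplit, ← hswap, ← hsum] at htot
    linarith

lemma kp_convPow (Q : ℕ → ℝ) (hnonneg : ∀ x, 0 ≤ Q x) (hQ0 : Q 0 = 0)
    (hintvl : ∀ a b c : ℕ, a ≤ b → b ≤ c → 0 < Q a → 0 < Q c → 0 < Q b)
    (hLC : ∀ x : ℕ, 1 ≤ x → Q x ^ 2 ≥ Q (x + 1) * Q (x - 1)) :
    ∀ n : ℕ, 1 ≤ n → ∀ s t : ℕ, s ≤ t →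
      convPow Q n (s - 1) * convPow Q n (t + 1) ≤ convPow Q n s * convPow Q n t := by
  intro n hn
  induction n, hn using Nat.le_induction with
  | base =>
    intro s t h
    simp only [convPow_one]
    exact kpQ Q hnonneg hQ0 hintvl hLC s t h
  | succ n hn ih =>
    exact conv_kp Q (convPow Q n) (convPow Q (n + 1)) hnonneg (convPow_nonneg Q hnonneg n)
      hQ0 (convPow_zero_arg Q hQ0 n hn) (kpQ Q hnonneg hQ0 hintvl hLC) ih
      (fun x => by simp [convPow])

end Aux

/-- Keilson–Sumita: if Q is log-concave on ℕ, then for m ≥ n,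
Q^{*m}(x+1)·Q^{*n}(x) ≥ Q^{*m}(x)·Q^{*n}(x+1). -/
theorem convPow_ratio_mono (Q : ℕ → ℝ)
    (hnonneg : ∀ x, 0 ≤ Q x) (hQ0 : Q 0 = 0) (hsum : ∑' x, Q x = 1)
    (hintvl : ∀ a b c : ℕ, a ≤ b → b ≤ c → 0 < Q a → 0 < Q c → 0 < Q b)
    (hLC : ∀ x : ℕ, 1 ≤ x → Q x ^ 2 ≥ Q (x + 1) * Q (x - 1)) :
    ∀ m n x : ℕ, n ≤ m →
      convPow Q m (x + 1) * convPow Q n x ≥ convPow Q m x * convPow Q n (x + 1) := by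
  intro m n x hnm
  rcases Nat.eq_zero_or_pos n with rfl | hn
  · have h1 : convPow Q 0 (x + 1) = 0 := by simp [convPow]
    rw [h1, mul_zero]
    exact mul_nonneg (convPow_nonneg Q hnonneg m _) (convPow_nonneg Q hnonneg 0 _)
  · obtain ⟨k, rfl⟩ : ∃ k, m = k + n := ⟨m - n, by omega⟩
    have hR0 : convPow Q n 0 = 0 := convPow_zero_arg Q hQ0 n hn
    have hRnn : ∀ x, 0 ≤ convPow Q n x := convPow_nonneg Q hnonneg n
    have tp2R := tp2_of_kp (convPow Q n) hR0 hRnn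
      (kp_convPow Q hnonneg hQ0 hintvl hLC n hn)
    rw [ge_iff_le, convPow_add Q k n (x + 1), convPow_add Q k n x,
      sum_extend (convPow Q k) (convPow Q n) hR0 (show x + 1 ≤ x + 2 from by omega),
      Finset.sum_mul, Finset.sum_mul]
    apply Finset.sum_le_sum
    intro y _
    have h := tp2R x (x + 1) 0 y (by omega) (by omega)
    simp only [Nat.sub_zero] at h
    have hky := convPow_nonneg Q hnonneg k y
    calc convPow Q k y * convPow Q n (x - y) * convPow Q n (x + 1)
        = convPow Q k y * (convPow Q n (x - y) * convPow Q n (x + 1)) := by ring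
      _ ≤ convPow Q k y * (convPow Q n x * convPow Q n (x + 1 - y)) :=
          mul_le_mul_of_nonneg_left h hky
      _ = convPow Q k y * convPow Q n (x + 1 - y) * convPow Q n x := by ring
end

section
/- For any pmf P on ℤ≥0 and pmf Q on ℕ, if the compound distribution C_Q P is log-concave then (P(1)² − P(0)·P(2))/(P(0)·P(1)) ≥ Q(2)/Q(1)², assuming P(0), P(1), Q(1) > 0. -/
/-- The compound distribution C_Q P. -/
noncomputable def cqp (Q P : ℕ → ℝ) (x : ℕ) : ℝ := ∑' y : ℕ, P y * convPow Q y x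

lemma convPow_zero {Q : ℕ → ℝ} (hQ0 : Q 0 = 0) (n : ℕ) (hn : 0 < n) :
    convPow Q n 0 = 0 := by
  obtain ⟨m, rfl⟩ := Nat.exists_eq_succ_of_ne_zero hn.ne'
  simp [convPow, hQ0]

lemma convPow_single {Q : ℕ → ℝ} (x : ℕ) : convPow Q 1 x = Q x := by
  show ∑ y ∈ Finset.range (x + 1), Q y * convPow Q 0 (x - y) = Q x
  rw [Finset.sum_range_succ]
  simp [convPow]
  apply Finset.sum_eq_zero
  intro i hi
  rw [if_neg (by simp at hi; omega)]

lemma convPow_one_s12 {Q : ℕ → ℝ} (hQ0 : Q 0 = 0) (n : ℕ) (hn : 2 ≤ n) :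
    convPow Q n 1 = 0 := by
  obtain ⟨m, rfl⟩ := Nat.exists_eq_succ_of_ne_zero (by omega : n ≠ 0)
  have hm : 0 < m := by omega
  show ∑ y ∈ Finset.range 2, Q y * convPow Q m (1 - y) = 0
  rw [Finset.sum_range_succ, Finset.sum_range_succ]
  simp [hQ0, convPow_zero hQ0 m hm]

lemma convPow_two {Q : ℕ → ℝ} (hQ0 : Q 0 = 0) (n : ℕ) (hn : 3 ≤ n) :
    convPow Q n 2 = 0 := by
  obtain ⟨m, rfl⟩ := Nat.exists_eq_succ_of_ne_zero (by omega : n ≠ 0)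
  have hm : 2 ≤ m := by omega
  show ∑ y ∈ Finset.range 3, Q y * convPow Q m (2 - y) = 0
  rw [Finset.sum_range_succ, Finset.sum_range_succ, Finset.sum_range_succ]
  simp [hQ0, convPow_zero hQ0 m (by omega), convPow_one_s12 hQ0 m hm]

/-- A necessary condition for log-concavity of a compound distribution:
(P(1)² − P(0)P(2))/(P(0)P(1)) ≥ Q(2)/Q(1)². -/
theorem compound_logConcave_necessary (P Q : ℕ → ℝ)
    (hPnonneg : ∀ x, 0 ≤ P x) (hPsum : ∑' x, P x = 1)
    (hQnonneg : ∀ x, 0 ≤ Q x) (hQ0 : Q 0 = 0) (hQsum : ∑' x, Q x = 1)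
    (hP0 : 0 < P 0) (hP1 : 0 < P 1) (hQ1 : 0 < Q 1)
    (hintvl : ∀ a b c : ℕ, a ≤ b → b ≤ c →
      0 < cqp Q P a → 0 < cqp Q P c → 0 < cqp Q P b)
    (hLC : ∀ x : ℕ, 1 ≤ x → cqp Q P x ^ 2 ≥ cqp Q P (x + 1) * cqp Q P (x - 1)) :
    (P 1 ^ 2 - P 0 * P 2) / (P 0 * P 1) ≥ Q 2 / Q 1 ^ 2 := by
  have hc0 : cqp Q P 0 = P 0 := by
    rw [cqp, tsum_eq_single 0]
    · simp [convPow]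
    · intro b hb
      rw [convPow_zero hQ0 b (Nat.pos_of_ne_zero hb), mul_zero]
  have hc1 : cqp Q P 1 = P 1 * Q 1 := by
    rw [cqp, tsum_eq_single 1]
    · rw [convPow_single]
    · intro b hb
      match b, hb with
      | 0, _ => simp [convPow]
      | (n+2), _ => rw [convPow_one_s12 hQ0 (n+2) (by omega), mul_zero]
  have hc2 : cqp Q P 2 = P 1 * Q 2 + P 2 * Q 1 ^ 2 := by
    rw [cqp, tsum_eq_sum (s := Finset.range 3) (by
      intro b hb
      rw [convPow_two hQ0 b (by simpa using hb), mul_zero])]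
    rw [Finset.sum_range_succ, Finset.sum_range_succ, Finset.sum_range_succ]
    have h1 : convPow Q 1 2 = Q 2 := convPow_single 2
    have h2 : convPow Q 2 2 = Q 1 ^ 2 := by
      show ∑ y ∈ Finset.range 3, Q y * convPow Q 1 (2 - y) = Q 1 ^ 2
      rw [Finset.sum_range_succ, Finset.sum_range_succ, Finset.sum_range_succ,
        convPow_single, convPow_single, convPow_single]
      simp [hQ0]
      ring
    rw [h1, h2]
    simp [convPow]
  have key := hLC 1 le_rfl
  rw [hc0, hc1, hc2] at key
  rw [ge_iff_le, div_le_div_iff₀ (by positivity) (by positivity)]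
  nlinarith [hPnonneg 2, hQnonneg 2, sq_nonneg (Q 1), mul_pos hP0 hP1]
end

section
/- If (a_i)_{i≥0} is a log-concave sequence of nonnegative reals, then the sequence b_i = Σ_{j=0}^i binom(i,j)·a_j is also log-concave, i.e., b_i² ≥ b_{i+1}·b_{i−1} for all i ≥ 1. -/
/-- Cross inequality for log-concave sequences with interval support:
for `j ≤ k`, `a j * a (k+1) ≤ a (j+1) * a k`. -/
lemma cross_ineq_of_logConcave (a : ℕ → ℝ)
    (hnonneg : ∀ i, 0 ≤ a i)
    (hintvl : ∀ i j k : ℕ, i ≤ j → j ≤ k → 0 < a i → 0 < a k → 0 < a j)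
    (hLC : ∀ i : ℕ, 1 ≤ i → a i ^ 2 ≥ a (i + 1) * a (i - 1)) :
    ∀ j k, j ≤ k → a j * a (k + 1) ≤ a (j + 1) * a k := by
  intro j k hjk
  induction k, hjk using Nat.le_induction with
  | base => rw [mul_comm]
  | succ k hjk IH =>
    by_cases h1 : 0 < a (k + 1)
    · by_cases h0 : 0 < a k
      · have hlc := hLC (k + 1) (by omega)
        have hlc' : a (k + 1) ^ 2 ≥ a (k + 2) * a k := by
          simpa using hlc
        have hstep : (a j * a (k + 2)) * (a k * a (k + 1)) ≤
            (a (j + 1) * a (k + 1)) * (a k * a (k + 1)) := by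
          nlinarith [mul_nonneg (hnonneg j) (hnonneg (k + 1)),
            mul_le_mul_of_nonneg_right IH (mul_nonneg (hnonneg (k+1)) (hnonneg (k+1)))]
        exact le_of_mul_le_mul_right hstep (mul_pos h0 h1)
      · have haj : a j = 0 := by
          by_contra h
          exact h0 (hintvl j k (k + 1) hjk (Nat.le_succ k)
            (lt_of_le_of_ne (hnonneg j) (Ne.symm h)) h1)
        rw [haj, zero_mul]
        exact mul_nonneg (hnonneg _) (hnonneg _)
    · have hz : a j * a (k + 2) = 0 := by
        by_contra h
        have hj : 0 < a j := lt_of_le_of_ne (hnonneg j) (by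
          intro h'; exact h (by rw [← h', zero_mul]))
        have hk2 : 0 < a (k + 2) := lt_of_le_of_ne (hnonneg (k+2)) (by
          intro h'; exact h (by rw [← h', mul_zero]))
        exact h1 (hintvl j (k + 1) (k + 2) (by omega) (by omega) hj hk2)
      rw [hz]
      exact mul_nonneg (hnonneg _) (hnonneg _)

/-- TP2 property of Pascal's triangle. -/
lemma pascal_tp2 (m j k : ℕ) (hjk : j ≤ k) :
    Nat.choose m k * Nat.choose (m + 1) j ≤ Nat.choose m j * Nat.choose (m + 1) k := by
  have h1 := Nat.choose_mul_succ_eq m k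
  have h2 := Nat.choose_mul_succ_eq m j
  have key : (Nat.choose m k * Nat.choose (m + 1) j) * (m + 1) ≤
      (Nat.choose m j * Nat.choose (m + 1) k) * (m + 1) := by
    calc (Nat.choose m k * Nat.choose (m + 1) j) * (m + 1)
        = (Nat.choose m k * (m + 1)) * Nat.choose (m + 1) j := by ring
      _ = ((m + 1).choose k * (m + 1 - k)) * Nat.choose (m + 1) j := by rw [h1]
      _ ≤ ((m + 1).choose k * (m + 1 - j)) * Nat.choose (m + 1) j := by
          exact Nat.mul_le_mul_right _ (Nat.mul_le_mul_left _ (Nat.sub_le_sub_left hjk _))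
      _ = (Nat.choose m j * (m + 1)) * Nat.choose (m + 1) k := by rw [h2]; ring
      _ = (Nat.choose m j * Nat.choose (m + 1) k) * (m + 1) := by ring
  exact Nat.le_of_mul_le_mul_right key (Nat.succ_pos m)

/-- Binomial transform preserves log-concavity of nonnegative sequences
(Karlin, Theorem 7.3). -/
theorem binomial_transform_logConcave (a : ℕ → ℝ)
    (hnonneg : ∀ i, 0 ≤ a i)
    (hintvl : ∀ i j k : ℕ, i ≤ j → j ≤ k → 0 < a i → 0 < a k → 0 < a j)
    (hLC : ∀ i : ℕ, 1 ≤ i → a i ^ 2 ≥ a (i + 1) * a (i - 1)) :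
    ∀ i : ℕ, 1 ≤ i →
      (∑ j ∈ Finset.range (i + 1), (Nat.choose i j : ℝ) * a j) ^ 2 ≥
        (∑ j ∈ Finset.range (i + 2), (Nat.choose (i + 1) j : ℝ) * a j) *
          (∑ j ∈ Finset.range i, (Nat.choose (i - 1) j : ℝ) * a j) := by
  have cross := cross_ineq_of_logConcave a hnonneg hintvl hLC
  intro i hi
  obtain ⟨m, rfl⟩ : ∃ m, i = m + 1 := ⟨i - 1, (Nat.succ_pred_eq_of_pos hi).symm⟩
  -- extend all sums to range (m+3)
  have hext : ∀ n : ℕ, n + 1 ≤ m + 3 →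
      (∑ j ∈ Finset.range (n + 1), (Nat.choose n j : ℝ) * a j)
      = ∑ j ∈ Finset.range (m + 3), (Nat.choose n j : ℝ) * a j := by
    intro n hn
    apply Finset.sum_subset (Finset.range_subset_range.2 hn)
    intro x _ hnx
    simp only [Finset.mem_range, not_lt] at hnx
    rw [Nat.choose_eq_zero_of_lt (by omega)]
    simp
  -- shift identity
  have hshift : ∀ n : ℕ, n ≤ m + 1 →
      (∑ j ∈ Finset.range (m + 3), (Nat.choose (n + 1) j : ℝ) * a j)
      = ∑ j ∈ Finset.range (m + 3), (Nat.choose n j : ℝ) * (a j + a (j + 1)) := by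
    intro n hn
    have e1 : ∑ j ∈ Finset.range (m + 3), (Nat.choose n j : ℝ) * (a j + a (j + 1))
        = (∑ j ∈ Finset.range (m + 3), (Nat.choose n j : ℝ) * a j)
          + ∑ j ∈ Finset.range (m + 3), (Nat.choose n j : ℝ) * a (j + 1) := by
      rw [← Finset.sum_add_distrib]
      exact Finset.sum_congr rfl (fun j _ => by ring)
    rw [e1, show m + 3 = (m + 2) + 1 from rfl,
      Finset.sum_range_succ' (fun j => (Nat.choose (n + 1) j : ℝ) * a j) (m + 2),
      Finset.sum_range_succ' (fun j => (Nat.choose n j : ℝ) * a j) (m + 2),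
      Finset.sum_range_succ (fun j => (Nat.choose n j : ℝ) * a (j + 1)) (m + 2),
      Nat.choose_eq_zero_of_lt (show n < m + 2 by omega)]
    have e2 : ∑ j ∈ Finset.range (m + 2), (Nat.choose (n + 1) (j + 1) : ℝ) * a (j + 1)
        = ∑ j ∈ Finset.range (m + 2),
            ((Nat.choose n (j + 1) : ℝ) * a (j + 1) + (Nat.choose n j : ℝ) * a (j + 1)) := by
      apply Finset.sum_congr rfl
      intro j _
      rw [Nat.choose_succ_succ]
      push_cast
      ring
    rw [e2, Finset.sum_add_distrib]
    simp
    ring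
  -- termwise inequality
  have hterm : ∀ j k : ℕ,
      (Nat.choose m j : ℝ) * a j * ((Nat.choose (m + 1) k : ℝ) * (a k + a (k + 1)))
        - (Nat.choose m j : ℝ) * (a j + a (j + 1)) * ((Nat.choose (m + 1) k : ℝ) * a k)
      + ((Nat.choose m k : ℝ) * a k * ((Nat.choose (m + 1) j : ℝ) * (a j + a (j + 1)))
        - (Nat.choose m k : ℝ) * (a k + a (k + 1)) * ((Nat.choose (m + 1) j : ℝ) * a j))
      ≤ 0 := by
    intro j k
    rcases le_total j k with h | h
    · have h1 := cross j k h
      have h2 : (Nat.choose m k : ℝ) * (Nat.choose (m + 1) j : ℝ)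
          ≤ (Nat.choose m j : ℝ) * (Nat.choose (m + 1) k : ℝ) := by
        exact_mod_cast pascal_tp2 m j k h
      nlinarith [mul_nonneg (sub_nonneg.2 h2) (sub_nonneg.2 h1)]
    · have h1 := cross k j h
      have h2 : (Nat.choose m j : ℝ) * (Nat.choose (m + 1) k : ℝ)
          ≤ (Nat.choose m k : ℝ) * (Nat.choose (m + 1) j : ℝ) := by
        exact_mod_cast pascal_tp2 m k j h
      nlinarith [mul_nonneg (sub_nonneg.2 h2) (sub_nonneg.2 h1)]
  -- main double-sum estimate
  set N := m + 3 with hN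
  have key : (∑ j ∈ Finset.range N, (Nat.choose m j : ℝ) * a j) *
      (∑ k ∈ Finset.range N, (Nat.choose (m + 1) k : ℝ) * (a k + a (k + 1)))
      - (∑ j ∈ Finset.range N, (Nat.choose m j : ℝ) * (a j + a (j + 1))) *
      (∑ k ∈ Finset.range N, (Nat.choose (m + 1) k : ℝ) * a k) ≤ 0 := by
    rw [Finset.sum_mul_sum, Finset.sum_mul_sum, ← Finset.sum_sub_distrib]
    have hrw : ∀ j ∈ Finset.range N,
        ((∑ k ∈ Finset.range N, (Nat.choose m j : ℝ) * a j * ((Nat.choose (m + 1) k : ℝ) * (a k + a (k + 1))))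
          - ∑ k ∈ Finset.range N, (Nat.choose m j : ℝ) * (a j + a (j + 1)) * ((Nat.choose (m + 1) k : ℝ) * a k))
        = ∑ k ∈ Finset.range N,
            ((Nat.choose m j : ℝ) * a j * ((Nat.choose (m + 1) k : ℝ) * (a k + a (k + 1)))
              - (Nat.choose m j : ℝ) * (a j + a (j + 1)) * ((Nat.choose (m + 1) k : ℝ) * a k)) := by
      intro j _
      rw [← Finset.sum_sub_distrib]
    rw [Finset.sum_congr rfl hrw]
    set f : ℕ → ℕ → ℝ := fun j k =>
      (Nat.choose m j : ℝ) * a j * ((Nat.choose (m + 1) k : ℝ) * (a k + a (k + 1)))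
        - (Nat.choose m j : ℝ) * (a j + a (j + 1)) * ((Nat.choose (m + 1) k : ℝ) * a k)
      with hf
    have hdouble : (∑ j ∈ Finset.range N, ∑ k ∈ Finset.range N, f j k)
        + (∑ j ∈ Finset.range N, ∑ k ∈ Finset.range N, f j k)
        = ∑ j ∈ Finset.range N, ∑ k ∈ Finset.range N, (f j k + f k j) := by
      conv_lhs => rw [show (∑ j ∈ Finset.range N, ∑ k ∈ Finset.range N, f j k)
          + (∑ j ∈ Finset.range N, ∑ k ∈ Finset.range N, f j k)
        = (∑ j ∈ Finset.range N, ∑ k ∈ Finset.range N, f j k)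
          + (∑ k ∈ Finset.range N, ∑ j ∈ Finset.range N, f j k) from by
          rw [Finset.sum_comm]]
      rw [← Finset.sum_add_distrib]
      apply Finset.sum_congr rfl
      intro j _
      rw [← Finset.sum_add_distrib]
    have hsum : ∑ j ∈ Finset.range N, ∑ k ∈ Finset.range N, (f j k + f k j) ≤ 0 := by
      apply Finset.sum_nonpos
      intro j _
      apply Finset.sum_nonpos
      intro k _
      exact hterm j k
    linarith
  -- put it together
  have hb1 : (∑ j ∈ Finset.range (m + 1 + 1), (Nat.choose (m + 1) j : ℝ) * a j)
      = ∑ j ∈ Finset.range N, (Nat.choose (m + 1) j : ℝ) * a j := hext (m + 1) (by omega)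
  have hb2 : (∑ j ∈ Finset.range (m + 1 + 2), (Nat.choose (m + 1 + 1) j : ℝ) * a j)
      = ∑ j ∈ Finset.range N, (Nat.choose (m + 2) j : ℝ) * a j := hext (m + 2) (by omega)
  have hb0 : (∑ j ∈ Finset.range (m + 1), (Nat.choose (m + 1 - 1) j : ℝ) * a j)
      = ∑ j ∈ Finset.range N, (Nat.choose m j : ℝ) * a j := hext m (by omega)
  rw [ge_iff_le, hb1, hb2, hb0]
  have hs1 := hshift m (by omega)
  have hs2 := hshift (m + 1) (by omega)
  rw [hs2]
  rw [← hs1] at key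
  nlinarith [key]
end

section
/- Let f(T) = (1+T²)^a·(1+T)^{2b} be a polynomial with a, b nonnegative integers and b ≥ 1, of degree 2a + 2b = 2x. Then the coefficient of T^x in f is at least the coefficient of T^{x+1}; equivalently, the coefficient sequence of f is unimodal (symmetric about degree x). -/
open Polynomial Finset

lemma adj_inc (n r : ℕ) (h : 2*r + 1 ≤ n) : n.choose r ≤ n.choose (r+1) := by
  rcases eq_or_lt_of_le h with h1 | h1
  · have h2 : n - r = r + 1 := by omega
    rw [← Nat.choose_symm (by omega : r ≤ n), h2]
  · exact Nat.choose_le_succ_of_lt_half_left (by omega)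

lemma adj_dec (n r : ℕ) (h : n ≤ 2*r + 1) : n.choose (r+1) ≤ n.choose r := by
  rcases le_or_gt n r with h1 | h1
  · rw [Nat.choose_eq_zero_of_lt (by omega)]
    exact Nat.zero_le _
  · have e1 : n.choose (r+1) = n.choose (n - (r+1)) := (Nat.choose_symm (by omega)).symm
    have e2 : n.choose r = n.choose (n - r) := (Nat.choose_symm (by omega)).symm
    have e3 : n - r = (n - (r+1)) + 1 := by omega
    rw [e1, e2, e3]
    exact adj_inc n (n - (r+1)) (by omega)

noncomputable def phiMC (a j : ℕ) : ℝ :=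
  (if j = 0 then 0 else (a.choose (j-1) : ℝ)) - (a.choose j : ℝ)

noncomputable def ccMC (b x j : ℕ) : ℝ :=
  if 2*j ≤ x+1 then (((2*b-1).choose (x+1-2*j) : ℕ) : ℝ) else 0

lemma phiMC_reflect (a j : ℕ) (hj : j ≤ a + 1) : phiMC a (a+1-j) = - phiMC a j := by
  unfold phiMC
  rcases Nat.eq_zero_or_pos j with rfl | hj1
  · simp [Nat.choose_succ_self, Nat.choose_self]
  rcases eq_or_lt_of_le hj with rfl | hj2
  · simp [Nat.choose_succ_self, Nat.choose_self]
  · have h1 : ¬ (a + 1 - j = 0) := by omega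
    have h2 : ¬ (j = 0) := by omega
    have e1 : a + 1 - j - 1 = a - j := by omega
    have e2 : a.choose (a - j) = a.choose j := Nat.choose_symm (by omega)
    have e3 : a + 1 - j = a - (j - 1) := by omega
    have e4 : a.choose (a - (j-1)) = a.choose (j-1) := Nat.choose_symm (by omega)
    rw [if_neg h1, if_neg h2, e1, e2, e3, e4]
    ring

lemma pair_nonneg (a b x j : ℕ) (hb : 1 ≤ b) (hx : x = a + b) (hj : j ≤ a + 1) :
    0 ≤ phiMC a j * ccMC b x j + phiMC a (a+1-j) * ccMC b x (a+1-j) := by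
  rw [phiMC_reflect a j hj]
  have key : 0 ≤ phiMC a j * (ccMC b x j - ccMC b x (a+1-j)) := by
    rcases le_or_gt (2*j) (a+1) with hcase | hcase
    · have hphi : phiMC a j ≤ 0 := by
        unfold phiMC
        rcases Nat.eq_zero_or_pos j with rfl | hj1
        · simp
        · rw [if_neg (by omega)]
          have := adj_inc a (j-1) (by omega)
          rw [show j - 1 + 1 = j by omega] at this
          have := Nat.cast_le (α := ℝ) |>.2 this
          linarith
      have hc : ccMC b x j ≤ ccMC b x (a+1-j) := by
        unfold ccMC
        have g1 : 2*j ≤ x+1 := by omega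
        rw [if_pos g1]
        by_cases g2 : 2*(a+1-j) ≤ x+1
        · rw [if_pos g2]
          have hm : b ≤ x+1-2*j := by omega
          have hm2 : x+1-2*j ≤ 2*b := by omega
          have he : x+1-2*(a+1-j) = (2*b-1) - ((x+1-2*j) - 1) := by omega
          rw [he, Nat.choose_symm (by omega)]
          have := adj_dec (2*b-1) ((x+1-2*j) - 1) (by omega)
          rw [show (x+1-2*j) - 1 + 1 = x+1-2*j by omega] at this
          exact_mod_cast this
        · rw [if_neg g2]
          have : 2*b - 1 < x+1-2*j := by omega
          rw [Nat.choose_eq_zero_of_lt this]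
          simp
      nlinarith [mul_nonneg (neg_nonneg.2 hphi) (sub_nonneg.2 hc)]
    · have hphi : 0 ≤ phiMC a j := by
        unfold phiMC
        rw [if_neg (by omega)]
        have := adj_dec a (j-1) (by omega)
        rw [show j - 1 + 1 = j by omega] at this
        have := Nat.cast_le (α := ℝ) |>.2 this
        linarith
      have hc : ccMC b x (a+1-j) ≤ ccMC b x j := by
        unfold ccMC
        have g2 : 2*(a+1-j) ≤ x+1 := by omega
        rw [if_pos g2]
        by_cases g1 : 2*j ≤ x+1
        · rw [if_pos g1]
          rcases Nat.eq_zero_or_pos (x+1-2*j) with hm0 | hm1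
          · have : 2*b - 1 < x+1-2*(a+1-j) := by omega
            rw [Nat.choose_eq_zero_of_lt this, hm0]
            simp
          · have hm : x+1-2*j ≤ b := by omega
            have he : x+1-2*(a+1-j) = (2*b-1) - ((x+1-2*j) - 1) := by omega
            rw [he, Nat.choose_symm (by omega)]
            have := adj_inc (2*b-1) ((x+1-2*j) - 1) (by omega)
            rw [show (x+1-2*j) - 1 + 1 = x+1-2*j by omega] at this
            exact_mod_cast this
        · rw [if_neg g1]
          have : 2*b - 1 < x+1-2*(a+1-j) := by omega
          rw [Nat.choose_eq_zero_of_lt this]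
          simp
      nlinarith [mul_nonneg hphi (sub_nonneg.2 hc)]
  nlinarith [key]

lemma hexpMC (a : ℕ) : (1 + X ^ 2 : Polynomial ℝ) ^ a
    = ∑ j ∈ Finset.range (a + 1), Polynomial.C ((a.choose j : ℝ)) * X ^ (2 * j) := by
  rw [add_comm, add_pow]
  refine Finset.sum_congr rfl fun j hj => ?_
  rw [one_pow, mul_one, ← pow_mul]
  simp [Polynomial.C_eq_natCast, mul_comm]

lemma hgMC (a n k : ℕ) : ((1 + X ^ 2 : Polynomial ℝ) ^ a * (1 + X) ^ n).coeff k
    = ∑ j ∈ Finset.range (a + 1), (a.choose j : ℝ) *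
        (if 2*j ≤ k then ((n.choose (k - 2*j)) : ℝ) else 0) := by
  rw [hexpMC, Finset.sum_mul, Polynomial.finset_sum_coeff]
  refine Finset.sum_congr rfl fun j hj => ?_
  rw [show Polynomial.C ((a.choose j : ℝ)) * X ^ (2*j) * (1+X)^n
      = Polynomial.C ((a.choose j : ℝ)) * ((1+X)^n * X ^ (2*j)) by ring]
  rw [Polynomial.coeff_C_mul, Polynomial.coeff_mul_X_pow']
  split_ifs with h
  · rw [Polynomial.coeff_one_add_X_pow]
  · rw [mul_zero]

/-- For f(T) = (1+T²)^a (1+T)^{2b} with b ≥ 1 and degree 2a+2b = 2x, the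
coefficient of T^x is at least the coefficient of T^{x+1}. -/
theorem middle_coeff_ge (a b x : ℕ) (hb : 1 ≤ b) (hx : 2 * a + 2 * b = 2 * x) :
    ((1 + X ^ 2 : Polynomial ℝ) ^ a * (1 + X) ^ (2 * b)).coeff (x + 1) ≤
      ((1 + X ^ 2 : Polynomial ℝ) ^ a * (1 + X) ^ (2 * b)).coeff x := by
  obtain ⟨y, rfl⟩ : ∃ y, x = y + 1 := ⟨x - 1, by omega⟩
  have hxab : y + 1 = a + b := by omega
  set g : Polynomial ℝ := (1 + X ^ 2) ^ a * (1 + X) ^ (2*b-1) with hgdef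
  have hf : ((1 + X ^ 2 : Polynomial ℝ) ^ a * (1 + X) ^ (2 * b)) = (1 + X) * g := by
    rw [hgdef, mul_left_comm, ← pow_succ', show 2*b - 1 + 1 = 2*b by omega]
  have c1 : ((1+X) * g).coeff (y+1) = g.coeff (y+1) + g.coeff y := by
    rw [add_mul, one_mul, Polynomial.coeff_add, Polynomial.coeff_X_mul]
  have c2 : ((1+X) * g).coeff (y+2) = g.coeff (y+2) + g.coeff (y+1) := by
    rw [add_mul, one_mul, Polynomial.coeff_add,
      show y+2 = (y+1)+1 by omega, Polynomial.coeff_X_mul]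
  have hplus : g.coeff (y+2) = ∑ j ∈ Finset.range (a+2), (a.choose j : ℝ) * ccMC b (y+1) j := by
    rw [hgdef, hgMC a (2*b-1) (y+2)]
    conv_rhs => rw [Finset.sum_range_succ]
    rw [Nat.choose_succ_self]
    push_cast
    rw [zero_mul, add_zero]
    refine Finset.sum_congr rfl fun j hj => ?_
    simp only [ccMC, show y+1+1 = y+2 from rfl]
  have hminus : g.coeff y
      = ∑ j ∈ Finset.range (a+2),
          (if j = 0 then 0 else ((a.choose (j-1) : ℕ) : ℝ)) * ccMC b (y+1) j := by
    rw [hgdef, hgMC a (2*b-1) y]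
    conv_rhs => rw [Finset.sum_range_succ' _ (a+1)]
    rw [if_pos rfl, zero_mul, add_zero]
    refine Finset.sum_congr rfl fun j hj => ?_
    rw [if_neg (by omega : ¬ (j + 1 = 0))]
    simp only [Nat.add_sub_cancel, ccMC]
    by_cases h : 2*j ≤ y
    · rw [if_pos h, if_pos (by omega : 2*(j+1) ≤ y+1+1),
        show y+1+1-2*(j+1) = y - 2*j by omega]
    · rw [if_neg h, if_neg (by omega : ¬ 2*(j+1) ≤ y+1+1)]
  have hdiff : g.coeff y - g.coeff (y+2)
      = ∑ j ∈ Finset.range (a+2), phiMC a j * ccMC b (y+1) j := by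
    rw [hplus, hminus, ← Finset.sum_sub_distrib]
    refine Finset.sum_congr rfl fun j hj => ?_
    simp only [phiMC, sub_mul]
  have hrefl : ∑ j ∈ Finset.range (a+2), phiMC a j * ccMC b (y+1) j
      = ∑ j ∈ Finset.range (a+2), phiMC a (a+1-j) * ccMC b (y+1) (a+1-j) := by
    have h := Finset.sum_range_reflect (fun j => phiMC a j * ccMC b (y+1) j) (a+2)
    simp only [show ∀ j : ℕ, a+2-1-j = a+1-j from fun j => by omega] at h
    exact h.symm
  have hsum : (0:ℝ) ≤ ∑ j ∈ Finset.range (a+2),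
      (phiMC a j * ccMC b (y+1) j + phiMC a (a+1-j) * ccMC b (y+1) (a+1-j)) :=
    Finset.sum_nonneg fun j hj =>
      pair_nonneg a b (y+1) j hb (by omega) (by
        have := Finset.mem_range.mp hj; omega)
  rw [Finset.sum_add_distrib, ← hrefl] at hsum
  have hfin : g.coeff (y+2) ≤ g.coeff y := by linarith [hdiff, hsum]
  calc ((1 + X ^ 2 : Polynomial ℝ) ^ a * (1 + X) ^ (2 * b)).coeff (y + 1 + 1)
      = g.coeff (y+2) + g.coeff (y+1) := by rw [hf, show y+1+1 = y+2 by omega, c2]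
    _ ≤ g.coeff (y+1) + g.coeff y := by linarith
    _ = ((1 + X ^ 2 : Polynomial ℝ) ^ a * (1 + X) ^ (2 * b)).coeff (y + 1) := by rw [hf, c1]
end
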